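/- Let M ≥ 2 and B ≥ 0 be natural numbers, and let a = M/(M − 1) as a real number. Then 2^B · (Γ(2^B)·Γ(a) / Γ(2^B + a)) ≤ 2^(−B/(M − 1)), where Γ denotes the real Gamma function; equivalently, 2^B · β(2^B, M/(M − 1)) ≤ 2^(−B/(M − 1)) where β(x, y) = Γ(x)Γ(y)/Γ(x + y) is the Beta function. -/

import Mathlib

open Real Filter Finset Topology

private lemma gamma_add_nat (a : ℝ) (ha : 0 < a) (n : ℕ) :
    Real.Gamma (a + n) = Real.Gamma a * ∏ j ∈ Finset.range n, (a + j) := by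
  induction n with
  | zero => simp
  | succ n ih =>
    have h : a + (n : ℝ) ≠ 0 := by positivity
    rw [Finset.prod_range_succ, ← mul_assoc, ← ih, Nat.cast_succ, ← add_assoc,
      Real.Gamma_add_one h]
    ring

private lemma key_pow_le (a : ℝ) (ha1 : 1 ≤ a) (m : ℕ) (hm : 1 ≤ m) :
    (m : ℝ) ^ a * Real.Gamma m ≤ Real.Gamma (m + a) := by
  have ha0 : 0 < a := lt_of_lt_of_le one_pos ha1
  set u : ℕ → ℝ := fun k => ((k : ℝ) + 1) ^ a * Real.Gamma ((k : ℝ) + 1) /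
      Real.Gamma ((k : ℝ) + 1 + a) with hu
  have hGpos : ∀ k : ℕ, 0 < Real.Gamma ((k : ℝ) + 1 + a) := fun k =>
    Real.Gamma_pos_of_pos (by positivity)
  have hGpos' : ∀ k : ℕ, 0 < Real.Gamma ((k : ℝ) + 1) := fun k =>
    Real.Gamma_pos_of_pos (by positivity)
  -- monotonicity
  have hmono : Monotone u := by
    apply monotone_nat_of_le_succ
    intro k
    have hk1 : (0:ℝ) < (k : ℝ) + 1 := by positivity
    have g1 : Real.Gamma (((k+1 : ℕ) : ℝ) + 1) = ((k:ℝ)+1) * Real.Gamma ((k:ℝ)+1) := by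
      push_cast
      rw [Real.Gamma_add_one (by positivity)]
    have g2 : Real.Gamma (((k+1 : ℕ) : ℝ) + 1 + a) =
        ((k:ℝ)+1+a) * Real.Gamma ((k:ℝ)+1+a) := by
      push_cast
      have : (k:ℝ) + 1 + 1 + a = ((k:ℝ) + 1 + a) + 1 := by ring
      rw [this, Real.Gamma_add_one (by positivity)]
    -- Bernoulli
    have hber : ((k:ℝ)+1+a) * ((k:ℝ)+1) ^ a ≤ ((k:ℝ)+2) ^ a * ((k:ℝ)+1) := by
      have hs : (-1:ℝ) ≤ 1/((k:ℝ)+1) :=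
        le_trans (by norm_num : (-1:ℝ) ≤ 0) (by positivity)
      have hb := one_add_mul_self_le_rpow_one_add (s := 1/((k:ℝ)+1)) hs (p := a) ha1
      have h1 : (1 : ℝ) + 1/((k:ℝ)+1) = ((k:ℝ)+2)/((k:ℝ)+1) := by field_simp; ring
      have h2 : (1 : ℝ) + a * (1/((k:ℝ)+1)) = ((k:ℝ)+1+a)/((k:ℝ)+1) := by
        field_simp
      rw [h1, h2, Real.div_rpow (by positivity) hk1.le] at hb
      rw [div_le_div_iff₀ hk1 (by positivity)] at hb
      linarith [hb]
    show u k ≤ u (k+1)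
    simp only [hu]
    rw [g1, g2, div_le_div_iff₀ (hGpos k) (by positivity)]
    push_cast
    have hkk : ((k:ℝ)+1+1) = (k:ℝ) + 2 := by ring
    rw [hkk]
    have hG1 := (hGpos' k).le
    have hG2 := (hGpos k).le
    nlinarith [mul_le_mul_of_nonneg_right hber (mul_nonneg hG1 hG2),
      (hGpos' k), (hGpos k)]
  -- limit
  have hid : ∀ k : ℕ, u k = Real.GammaSeq a (k+1) * ((a + ((k:ℝ)+1)) / ((k:ℝ)+1)) /
      Real.Gamma a := by
    intro k
    have hGa : Real.Gamma a ≠ 0 := (Real.Gamma_pos_of_pos ha0).ne'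
    have hfact : Real.Gamma ((k : ℝ) + 1) = ((Nat.factorial k : ℕ) : ℝ) :=
      Real.Gamma_nat_eq_factorial k
    have hGadd : Real.Gamma ((k : ℝ) + 1 + a) =
        Real.Gamma a * ∏ j ∈ Finset.range (k+1), (a + j) := by
      have : (k : ℝ) + 1 + a = a + ((k+1 : ℕ) : ℝ) := by push_cast; ring
      rw [this, gamma_add_nat a ha0]
    have hps : (∏ j ∈ Finset.range (k+1+1), (a + (j:ℝ)))
        = (∏ j ∈ Finset.range (k+1), (a + (j:ℝ))) * (a + ((k+1:ℕ):ℝ)) :=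
      Finset.prod_range_succ _ _
    have hprodpos : (0:ℝ) < ∏ j ∈ Finset.range (k+1), (a + (j:ℝ)) :=
      Finset.prod_pos fun j _ => by positivity
    simp only [hu, Real.GammaSeq, hfact, hGadd, hps, Nat.factorial_succ]
    push_cast
    have hk1 : ((k:ℝ)+1) ≠ 0 := by positivity
    have hp2 : a + ((k:ℝ)+1) ≠ 0 := by positivity
    field_simp
  have hlim : Tendsto u atTop (𝓝 1) := by
    have h1 : Tendsto (fun k : ℕ => Real.GammaSeq a (k+1)) atTop (𝓝 (Real.Gamma a)) :=
      (Real.GammaSeq_tendsto_Gamma a).comp (tendsto_add_atTop_nat 1)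
    have h2 : Tendsto (fun k : ℕ => (a + ((k:ℝ)+1)) / ((k:ℝ)+1)) atTop (𝓝 1) := by
      have hdiv : Tendsto (fun k : ℕ => a / ((k:ℝ)+1)) atTop (𝓝 0) := by
        have h3 := (tendsto_const_div_atTop_nhds_zero_nat a).comp (tendsto_add_atTop_nat 1)
        apply h3.congr
        intro k
        show a / ((k+1 : ℕ):ℝ) = a / ((k:ℝ)+1)
        push_cast
        ring
      have h0 : Tendsto (fun k : ℕ => a / ((k:ℝ)+1) + 1) atTop (𝓝 (0 + 1)) :=
        hdiv.add_const 1
      simp only [zero_add] at h0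
      apply h0.congr
      intro k
      have hk1 : ((k:ℝ)+1) ≠ 0 := by positivity
      field_simp
    have hGa : Real.Gamma a ≠ 0 := (Real.Gamma_pos_of_pos ha0).ne'
    have := (h1.mul h2).div_const (Real.Gamma a)
    rw [mul_one, div_self hGa] at this
    exact this.congr fun k => (hid k).symm
  have hub : u (m - 1) ≤ 1 := hmono.ge_of_tendsto hlim (m - 1)
  have hcast : ((m - 1 : ℕ) : ℝ) + 1 = (m : ℝ) := by
    have : m - 1 + 1 = m := Nat.succ_pred_eq_of_pos hm
    exact_mod_cast congrArg (Nat.cast : ℕ → ℝ) this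
  rw [hu] at hub
  simp only [hcast] at hub
  rw [div_le_one (Real.Gamma_pos_of_pos (by positivity : (0:ℝ) < (m:ℝ) + a))] at hub
  · linarith
  
private lemma gamma_le_one (a : ℝ) (ha1 : 1 ≤ a) (ha2 : a ≤ 2) : Real.Gamma a ≤ 1 := by
  have h := Real.convexOn_Gamma.2 (Set.mem_Ioi.2 one_pos) (Set.mem_Ioi.2 two_pos)
    (sub_nonneg.2 ha2) (sub_nonneg.2 ha1) (by ring : (2 - a) + (a - 1) = 1)
  simp only [smul_eq_mul, Real.Gamma_one] at h
  have h2 : Real.Gamma 2 = 1 := by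
    rw [show (2:ℝ) = 1 + 1 by norm_num, Real.Gamma_add_one one_ne_zero, Real.Gamma_one]
    norm_num
  rw [h2] at h
  have he : (2 - a) * 1 + (a - 1) * 2 = a := by ring
  rw [he] at h
  linarith

/-- The RVQ mean-square quantization error bound: for a codebook of `2^B`
codewords quantizing an `M`-dimensional unit-norm channel direction,
`σ_q² = 2^B · β(2^B, M/(M−1)) ≤ 2^(−B/(M−1))`, where
`β(x, y) = Γ(x)Γ(y)/Γ(x + y)`. -/
theorem rvq_quantization_error_bound
    (M B : ℕ) (hM : 2 ≤ M) :
    (2 : ℝ) ^ B *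
        (Real.Gamma ((2 : ℝ) ^ B) * Real.Gamma ((M : ℝ) / ((M : ℝ) - 1)) /
          Real.Gamma ((2 : ℝ) ^ B + (M : ℝ) / ((M : ℝ) - 1)))
      ≤ (2 : ℝ) ^ (-(B : ℝ) / ((M : ℝ) - 1)) := by
  have hM2 : (2:ℝ) ≤ (M:ℝ) := by exact_mod_cast hM
  have hM1 : (0:ℝ) < (M:ℝ) - 1 := by linarith
  set a : ℝ := (M : ℝ) / ((M : ℝ) - 1) with ha
  have ha1 : 1 ≤ a := by rw [ha, le_div_iff₀ hM1]; linarith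
  have ha2 : a ≤ 2 := by rw [ha, div_le_iff₀ hM1]; linarith
  have ha0 : 0 < a := lt_of_lt_of_le one_pos ha1
  set m : ℕ := 2 ^ B with hm
  have hmcast : ((m : ℕ) : ℝ) = (2:ℝ) ^ B := by rw [hm]; push_cast; ring
  have hm1 : 1 ≤ m := Nat.one_le_two_pow
  have hx : (0:ℝ) < (2:ℝ) ^ B := by positivity
  have hkey : ((m:ℝ)) ^ a * Real.Gamma (m:ℝ) ≤ Real.Gamma ((m:ℝ) + a) :=
    key_pow_le a ha1 m hm1
  rw [hmcast] at hkey
  have hGa1 : Real.Gamma a ≤ 1 := gamma_le_one a ha1 ha2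
  have hGx : 0 < Real.Gamma ((2:ℝ) ^ B) := Real.Gamma_pos_of_pos hx
  have hGxa : 0 < Real.Gamma ((2:ℝ) ^ B + a) := Real.Gamma_pos_of_pos (by positivity)
  have hGa0 : 0 < Real.Gamma a := Real.Gamma_pos_of_pos ha0
  have hxa : (0:ℝ) < ((2:ℝ) ^ B) ^ a := Real.rpow_pos_of_pos hx a
  -- LHS ≤ 2^B * (Γx * 1 / (x^a Γx)) = 2^B * x^(-a)
  have step1 : (2:ℝ) ^ B * (Real.Gamma ((2:ℝ)^B) * Real.Gamma a / Real.Gamma ((2:ℝ)^B + a))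
      ≤ (2:ℝ) ^ B * (((2:ℝ)^B) ^ (1 - a) / (2:ℝ)^B) := by
    have h1 : Real.Gamma ((2:ℝ)^B) * Real.Gamma a / Real.Gamma ((2:ℝ)^B + a)
        ≤ Real.Gamma ((2:ℝ)^B) * Real.Gamma a / (((2:ℝ)^B) ^ a * Real.Gamma ((2:ℝ)^B)) := by
      apply div_le_div_of_nonneg_left (by positivity) (by positivity) hkey
    have h2 : Real.Gamma ((2:ℝ)^B) * Real.Gamma a / (((2:ℝ)^B) ^ a * Real.Gamma ((2:ℝ)^B))
        = Real.Gamma a / ((2:ℝ)^B) ^ a := by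
      field_simp
    have h3 : Real.Gamma a / ((2:ℝ)^B) ^ a ≤ 1 / ((2:ℝ)^B) ^ a := by
      gcongr
    have h4 : (1:ℝ) / ((2:ℝ)^B) ^ a = ((2:ℝ)^B) ^ (1 - a) / (2:ℝ)^B := by
      rw [Real.rpow_sub hx, Real.rpow_one]
      field_simp
    calc (2:ℝ) ^ B * (Real.Gamma ((2:ℝ)^B) * Real.Gamma a / Real.Gamma ((2:ℝ)^B + a))
        ≤ (2:ℝ) ^ B * (Real.Gamma a / ((2:ℝ)^B) ^ a) := by
          rw [← h2]; exact mul_le_mul_of_nonneg_left h1 hx.le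
      _ ≤ (2:ℝ) ^ B * (1 / ((2:ℝ)^B) ^ a) := mul_le_mul_of_nonneg_left h3 hx.le
      _ = (2:ℝ) ^ B * (((2:ℝ)^B) ^ (1 - a) / (2:ℝ)^B) := by rw [h4]
  have hrhs : (2:ℝ) ^ B * (((2:ℝ)^B) ^ (1 - a) / (2:ℝ)^B) = (2:ℝ) ^ (-(B:ℝ) / ((M:ℝ) - 1)) := by
    have hcancel : (2:ℝ) ^ B * (((2:ℝ)^B) ^ (1 - a) / (2:ℝ)^B) = ((2:ℝ)^B) ^ (1 - a) := by
      field_simp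
    rw [hcancel, ← Real.rpow_natCast (2:ℝ) B, ← Real.rpow_mul (by norm_num : (0:ℝ) ≤ 2)]
    congr 1
    rw [ha]
    field_simp
    ring
  calc (2:ℝ) ^ B * (Real.Gamma ((2:ℝ)^B) * Real.Gamma a / Real.Gamma ((2:ℝ)^B + a))
      ≤ (2:ℝ) ^ B * (((2:ℝ)^B) ^ (1 - a) / (2:ℝ)^B) := step1
    _ = (2:ℝ) ^ (-(B:ℝ) / ((M:ℝ) - 1)) := hrhs
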